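/- Let L > 0 and let φ : ℝ × [0, L] → ℝ be continuous, harmonic on the open strip ℝ × (0, L), with boundary values φ(x, 0) = 0 and φ(x, L) = L for all x ∈ ℝ, and satisfying 0 ≤ φ(x, y) ≤ L on the strip. Then φ(x, y) = y for all (x, y). -/

import Mathlib

noncomputable section

open Real Set Filter Topology

/-- Partial derivative of `f : ℝ × ℝ → ℝ` in the first variable. -/
def pd1 (f : ℝ × ℝ → ℝ) (p : ℝ × ℝ) : ℝ := deriv (fun t => f (t, p.2)) p.1

/-- Partial derivative of `f : ℝ × ℝ → ℝ` in the second variable. -/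
def pd2 (f : ℝ × ℝ → ℝ) (p : ℝ × ℝ) : ℝ := deriv (fun t => f (p.1, t)) p.2

/-- Gradient of `f : ℝ × ℝ → ℝ`. -/
def grad2 (f : ℝ × ℝ → ℝ) (p : ℝ × ℝ) : ℝ × ℝ := (pd1 f p, pd2 f p)

/-- Laplacian of `f : ℝ × ℝ → ℝ`. -/
def lap2 (f : ℝ × ℝ → ℝ) (p : ℝ × ℝ) : ℝ :=
  deriv (fun t => pd1 f (t, p.2)) p.1 + deriv (fun t => pd2 f (p.1, t)) p.2

/-- `f` is harmonic on the set `s`: it is twice differentiable with vanishing Laplacian there. -/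
def Harmonic2On (f : ℝ × ℝ → ℝ) (s : Set (ℝ × ℝ)) : Prop :=
  ∀ p ∈ s, ContDiffAt ℝ 2 f p ∧ lap2 f p = 0


lemma deriv2_prep {g : ℝ → ℝ} {a : ℝ} (hg : ContDiffAt ℝ 2 g a) :
    ∃ u : Set ℝ, IsOpen u ∧ a ∈ u ∧ ContinuousOn g u ∧
      DifferentiableOn ℝ (deriv g) u ∧ ContinuousOn (deriv (deriv g)) u := by
  obtain ⟨v, hv, hgv⟩ := hg.contDiffOn le_rfl (by simp)
  obtain ⟨u, huv, huo, hau⟩ := mem_nhds_iff.1 hv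
  have hg2 : ContDiffOn ℝ 2 g u := hgv.mono huv
  have hd1 : ContDiffOn ℝ 1 (deriv g) u := by
    have := hg2.deriv_of_isOpen huo (show (1:WithTop ℕ∞) + 1 ≤ 2 by norm_num)
    exact_mod_cast this
  refine ⟨u, huo, hau, hg2.continuousOn, hd1.differentiableOn one_ne_zero, ?_⟩
  exact hd1.continuousOn_deriv_of_isOpen huo le_rfl

lemma contDiffAt_two_deriv_diff {g : ℝ → ℝ} {a : ℝ} (hg : ContDiffAt ℝ 2 g a) :
    DifferentiableAt ℝ (deriv g) a := by
  obtain ⟨u, huo, hau, -, hd, -⟩ := deriv2_prep hg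
  exact (hd a hau).differentiableAt (huo.mem_nhds hau)

lemma second_deriv_nonpos_of_isLocalMax {g : ℝ → ℝ} {a : ℝ}
    (hg : ContDiffAt ℝ 2 g a) (hm : IsLocalMax g a) : deriv (deriv g) a ≤ 0 := by
  by_contra hc
  push_neg at hc
  obtain ⟨u, huo, hau, hgc, hgd, hg2c⟩ := deriv2_prep hg
  have h1 : ∀ᶠ x in 𝓝 a, 0 < deriv (deriv g) x := by
    have hca : ContinuousAt (deriv (deriv g)) a := (hg2c.continuousAt (huo.mem_nhds hau))
    exact hca (isOpen_Ioi.mem_nhds hc)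
  have hev : ∀ᶠ x in 𝓝 a, (g x ≤ g a ∧ 0 < deriv (deriv g) x) ∧ x ∈ u :=
    (hm.and h1).and (huo.mem_nhds hau)
  rw [Metric.eventually_nhds_iff] at hev
  obtain ⟨δ, hδ, hball⟩ := hev
  set b := a + δ/2 with hb
  have hab : a < b := by simp [hb]; linarith
  have hsub : Icc a b ⊆ {y | dist y a < δ} := by
    intro x hx
    simp only [mem_setOf_eq, Real.dist_eq, abs_lt]
    have h1 := hx.1; have h2 := hx.2
    rw [hb] at h2
    constructor <;> linarith
  have hIu : Icc a b ⊆ u := fun x hx => (hball (hsub hx)).2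
  have hmono : StrictMonoOn (deriv g) (Icc a b) := by
    refine strictMonoOn_of_deriv_pos (convex_Icc a b) ((hgd.continuousOn).mono hIu) ?_
    intro x hx
    rw [interior_Icc] at hx
    exact (hball (hsub (Ioo_subset_Icc_self hx))).1.2
  have hd0 : deriv g a = 0 := hm.deriv_eq_zero
  have hgpos : ∀ x ∈ interior (Icc a b), 0 < deriv g x := by
    rw [interior_Icc]
    intro x hx
    have := hmono (left_mem_Icc.2 hab.le) (Ioo_subset_Icc_self hx) hx.1
    rwa [hd0] at this
  have hgm : StrictMonoOn g (Icc a b) :=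
    strictMonoOn_of_deriv_pos (convex_Icc a b) (hgc.mono hIu) hgpos
  have h2 : g a < g b := hgm (left_mem_Icc.2 hab.le) (right_mem_Icc.2 hab.le) hab
  have h3 : g b ≤ g a := (hball (hsub (right_mem_Icc.2 hab.le))).1.1
  linarith

lemma sin_ge_half_aux {θ : ℝ} (h1 : π/3 ≤ θ) (h2 : θ ≤ π/2) : 1/2 ≤ Real.sin θ := by
  have hπ := Real.pi_pos
  have hmono := Real.strictMonoOn_sin
  have hm : Real.sin (π/3) ≤ Real.sin θ := by
    rcases eq_or_lt_of_le h1 with h | h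
    · rw [h]
    · exact (hmono ⟨by linarith, by linarith⟩ ⟨by linarith, h2⟩ h).le
  rw [Real.sin_pi_div_three] at hm
  have : (1:ℝ)/2 ≤ Real.sqrt 3 / 2 := by
    have : (1:ℝ) ≤ Real.sqrt 3 := by
      rw [show (1:ℝ) = Real.sqrt 1 by simp]
      exact Real.sqrt_le_sqrt (by norm_num)
    linarith
  linarith

lemma sin_ge_half {θ : ℝ} (h1 : π/3 ≤ θ) (h2 : θ ≤ 2*π/3) : 1/2 ≤ Real.sin θ := by
  have hπ := Real.pi_pos
  rcases le_or_gt θ (π/2) with h | h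
  · exact sin_ge_half_aux h1 h
  · rw [← Real.sin_pi_sub]
    exact sin_ge_half_aux (by linarith) (by linarith)


lemma strip_le {L : ℝ} (hL : 0 < L) (u : ℝ × ℝ → ℝ)
    (hcont : ContinuousOn u {p : ℝ × ℝ | p.2 ∈ Icc 0 L})
    (hreg : ∀ p : ℝ × ℝ, p.2 ∈ Ioo 0 L →
      ContDiffAt ℝ 2 (fun t => u (t, p.2)) p.1 ∧ ContDiffAt ℝ 2 (fun t => u (p.1, t)) p.2 ∧
      deriv (deriv (fun t => u (t, p.2))) p.1 + deriv (deriv (fun t => u (p.1, t))) p.2 = 0)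
    (hbot : ∀ x : ℝ, u (x, 0) ≤ 0) (htop : ∀ x : ℝ, u (x, L) ≤ 0)
    (hb : ∀ p : ℝ × ℝ, p.2 ∈ Icc 0 L → u p ≤ L) :
    ∀ p : ℝ × ℝ, p.2 ∈ Icc 0 L → u p ≤ 0 := by
  intro p0 hp0
  have hπ := Real.pi_pos
  set k : ℝ := π / (3 * L) with hk_def
  have hk : 0 < k := by positivity
  have hkL : k * L = π / 3 := by rw [hk_def]; field_simp
  -- the barrier
  set h : ℝ × ℝ → ℝ := fun q => Real.cosh (k * q.1) * Real.sin (k * (q.2 + L)) with hh_def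
  have hsin : ∀ y ∈ Icc (0:ℝ) L, 1/2 ≤ Real.sin (k * (y + L)) := by
    intro y hy
    apply sin_ge_half
    · have : k * (y + L) = k * y + π/3 := by rw [mul_add, hkL]
      rw [this]
      nlinarith [mul_nonneg hk.le hy.1]
    · have : k * (y + L) = k * y + π/3 := by rw [mul_add, hkL]
      rw [this]
      nlinarith [mul_le_mul_of_nonneg_left hy.2 hk.le]
  have hhalf : ∀ q : ℝ × ℝ, q.2 ∈ Icc 0 L → Real.cosh (k * q.1) * (1/2) ≤ h q := by
    intro q hq
    exact mul_le_mul_of_nonneg_left (hsin q.2 hq) (Real.cosh_pos (k * q.1)).le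
  have hhpos : ∀ q : ℝ × ℝ, q.2 ∈ Icc 0 L → 0 < h q := by
    intro q hq
    have := hhalf q hq
    nlinarith [Real.cosh_pos (k * q.1)]
  -- main estimate: ∀ ε > 0, u p0 ≤ ε * h p0
  have key : ∀ ε : ℝ, 0 < ε → u p0 ≤ ε * h p0 := by
    intro ε hε
    set R : ℝ := max |p0.1| (4 * L / (ε * k)) + 1 with hR_def
    have hR1 : |p0.1| < R := by
      have := le_max_left |p0.1| (4 * L / (ε * k)); rw [hR_def]; linarith
    have hR0 : 0 < R := lt_of_le_of_lt (abs_nonneg _) hR1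
    have hcoshR : L ≤ ε * Real.cosh (k * R) / 2 := by
      have h1 : 4 * L / (ε * k) ≤ R - 1 := by
        rw [hR_def]; simp [le_max_right]
      have h2 : 4 * L / ε ≤ k * R := by
        have : k * (4 * L / (ε * k)) = 4 * L / ε := by field_simp
        nlinarith [mul_le_mul_of_nonneg_left h1 hk.le]
      have h3 : k * R + 1 ≤ 2 * Real.cosh (k * R) := by
        have := Real.add_one_le_exp (k * R)
        have hc : Real.cosh (k * R) = (Real.exp (k * R) + Real.exp (-(k * R))) / 2 :=
          Real.cosh_eq _
        nlinarith [Real.exp_pos (-(k * R))]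
      have h4 : 4 * L / ε ≤ 2 * Real.cosh (k * R) :=
        le_trans h2 (by linarith)
      rw [div_le_iff₀ hε] at h4
      nlinarith [h4]
    -- maximum principle on the rectangle [-R,R] × [0,L]
    have key2 : ∀ η : ℝ, 0 < η → u p0 ≤ ε * h p0 + η * R^2 := by
      intro η hη
      set K : Set (ℝ × ℝ) := Icc (-R) R ×ˢ Icc (0:ℝ) L with hK_def
      set F : ℝ × ℝ → ℝ := fun q => u q + (η * q.1^2 - ε * h q) with hF_def
      have hKs : K ⊆ {p : ℝ × ℝ | p.2 ∈ Icc 0 L} := fun q hq => hq.2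
      have hFc : ContinuousOn F K := by
        apply ContinuousOn.add (hcont.mono hKs)
        apply Continuous.continuousOn
        rw [hh_def]
        fun_prop
      have hKc : IsCompact K := isCompact_Icc.prod isCompact_Icc
      have hp0K : p0 ∈ K := ⟨abs_le.1 hR1.le, hp0⟩
      obtain ⟨p, hpK, hpmax⟩ := hKc.exists_isMaxOn ⟨p0, hp0K⟩ hFc
      obtain ⟨hpx, hpy⟩ := hpK
      have hFpb : F p ≤ η * R^2 := by
        by_cases hint : -R < p.1 ∧ p.1 < R ∧ 0 < p.2 ∧ p.2 < L
        · -- interior: contradiction with the maximum principle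
          exfalso
          have hp2 : p.2 ∈ Ioo 0 L := ⟨hint.2.2.1, hint.2.2.2⟩
          obtain ⟨hc1, hc2, hlap⟩ := hreg p hp2
          have hKn : K ∈ 𝓝 p := by
            have ho : IsOpen (Ioo (-R) R ×ˢ Ioo (0:ℝ) L) := isOpen_Ioo.prod isOpen_Ioo
            exact mem_of_superset (ho.mem_nhds ⟨⟨hint.1, hint.2.1⟩, hp2⟩)
              (prod_mono Ioo_subset_Icc_self Ioo_subset_Icc_self)
          have hlm : IsLocalMax F p := hpmax.isLocalMax hKn
          have hlm1 : IsLocalMax (fun t : ℝ => F (t, p.2)) p.1 := by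
            have hct : ContinuousAt (fun t : ℝ => ((t, p.2) : ℝ × ℝ)) p.1 :=
              (continuous_id.prodMk continuous_const).continuousAt
            exact hct.eventually hlm
          have hlm2 : IsLocalMax (fun t : ℝ => F (p.1, t)) p.2 := by
            have hct : ContinuousAt (fun t : ℝ => ((p.1, t) : ℝ × ℝ)) p.2 :=
              (continuous_const.prodMk continuous_id).continuousAt
            exact hct.eventually hlm
          -- first variable computations
          have hS : ∀ t : ℝ, HasDerivAt
              (fun s : ℝ => η * s^2 - ε * (Real.cosh (k*s) * Real.sin (k*(p.2+L))))
              (η * (2*t) - ε * (Real.sinh (k*t) * k * Real.sin (k*(p.2+L)))) t := by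
            intro t
            have hkt : HasDerivAt (fun s : ℝ => k * s) k t := by
              simpa using (hasDerivAt_id t).const_mul k
            have h1 : HasDerivAt (fun s : ℝ => Real.cosh (k*s)) (Real.sinh (k*t) * k) t :=
              hkt.cosh
            have h2 : HasDerivAt (fun s : ℝ => η * s^2) (η * (2*t)) t := by
              simpa using (hasDerivAt_pow 2 t).const_mul η
            exact h2.sub ((h1.mul_const _).const_mul ε)
          have hS' : HasDerivAt
              (fun t : ℝ => η * (2*t) - ε * (Real.sinh (k*t) * k * Real.sin (k*(p.2+L))))
              (η * 2 - ε * (Real.cosh (k*p.1) * k * k * Real.sin (k*(p.2+L)))) p.1 := by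
            have hkt : HasDerivAt (fun s : ℝ => k * s) k p.1 := by
              simpa using (hasDerivAt_id p.1).const_mul k
            have h1 : HasDerivAt (fun s : ℝ => Real.sinh (k*s)) (Real.cosh (k*p.1) * k) p.1 :=
              hkt.sinh
            have h2 : HasDerivAt (fun s : ℝ => η * (2*s)) (η * 2) p.1 := by
              simpa using ((hasDerivAt_id p.1).const_mul 2).const_mul η
            exact h2.sub (((h1.mul_const k).mul_const _).const_mul ε)
          have hud1 : ∀ t : ℝ, DifferentiableAt ℝ (fun s : ℝ => u (s, p.2)) t := fun t =>
            ((hreg (t, p.2) hp2).1).differentiableAt (by norm_num)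
          have e1 : deriv (fun t : ℝ => F (t, p.2)) = fun t =>
              deriv (fun s : ℝ => u (s, p.2)) t
                + (η * (2*t) - ε * (Real.sinh (k*t) * k * Real.sin (k*(p.2+L)))) := by
            funext t
            have hfl : (fun t : ℝ => F (t, p.2)) = fun s =>
                u (s, p.2) + (η * s^2 - ε * (Real.cosh (k*s) * Real.sin (k*(p.2+L)))) := rfl
            rw [hfl, deriv_fun_add (hud1 t) (hS t).differentiableAt, (hS t).deriv]
          have hud2 : DifferentiableAt ℝ (deriv (fun s : ℝ => u (s, p.2))) p.1 :=
            contDiffAt_two_deriv_diff hc1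
          have T1 : deriv (deriv (fun t : ℝ => F (t, p.2))) p.1
              = deriv (deriv (fun s : ℝ => u (s, p.2))) p.1
                + (η * 2 - ε * (Real.cosh (k*p.1) * k * k * Real.sin (k*(p.2+L)))) := by
            rw [e1, deriv_fun_add hud2 hS'.differentiableAt, hS'.deriv]
          -- second variable computations
          have hT : ∀ t : ℝ, HasDerivAt
              (fun s : ℝ => η * p.1^2 - ε * (Real.cosh (k*p.1) * Real.sin (k*(s+L))))
              (-(ε * (Real.cosh (k*p.1) * (Real.cos (k*(t+L)) * k)))) t := by
            intro t
            have hkt : HasDerivAt (fun s : ℝ => k * (s + L)) k t := by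
              simpa using ((hasDerivAt_id t).add_const L).const_mul k
            have h1 : HasDerivAt (fun s : ℝ => Real.sin (k*(s+L))) (Real.cos (k*(t+L)) * k) t :=
              hkt.sin
            exact HasDerivAt.const_sub (η * p.1^2) ((h1.const_mul _).const_mul ε)
          have hT' : HasDerivAt
              (fun t : ℝ => -(ε * (Real.cosh (k*p.1) * (Real.cos (k*(t+L)) * k))))
              (-(ε * (Real.cosh (k*p.1) * (-Real.sin (k*(p.2+L)) * k * k)))) p.2 := by
            have hkt : HasDerivAt (fun s : ℝ => k * (s + L)) k p.2 := by
              simpa using ((hasDerivAt_id p.2).add_const L).const_mul k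
            have h1 : HasDerivAt (fun s : ℝ => Real.cos (k*(s+L)))
                (-Real.sin (k*(p.2+L)) * k) p.2 := hkt.cos
            exact (((h1.mul_const k).const_mul _).const_mul ε).neg
          have hvd1 : ∀ t ∈ Ioo (0:ℝ) L, DifferentiableAt ℝ (fun s : ℝ => u (p.1, s)) t :=
            fun t ht => ((hreg (p.1, t) ht).2.1).differentiableAt (by norm_num)
          have hvd2 : DifferentiableAt ℝ (deriv (fun s : ℝ => u (p.1, s))) p.2 :=
            contDiffAt_two_deriv_diff hc2
          have T2 : deriv (deriv (fun t : ℝ => F (p.1, t))) p.2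
              = deriv (deriv (fun s : ℝ => u (p.1, s))) p.2
                + -(ε * (Real.cosh (k*p.1) * (-Real.sin (k*(p.2+L)) * k * k))) := by
            have hev : (deriv (fun t : ℝ => F (p.1, t))) =ᶠ[𝓝 p.2] fun t =>
                deriv (fun s : ℝ => u (p.1, s)) t
                  + (-(ε * (Real.cosh (k*p.1) * (Real.cos (k*(t+L)) * k)))) := by
              filter_upwards [Ioo_mem_nhds hp2.1 hp2.2] with t ht
              have hfl : (fun t : ℝ => F (p.1, t)) = fun s =>
                  u (p.1, s) + (η * p.1^2 - ε * (Real.cosh (k*p.1) * Real.sin (k*(s+L)))) := rfl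
              rw [hfl, deriv_fun_add (hvd1 t ht) (hT t).differentiableAt, (hT t).deriv]
            rw [hev.deriv_eq, deriv_fun_add hvd2 hT'.differentiableAt, hT'.deriv]
          -- smoothness of the line restrictions of F
          have hsm1 : ContDiffAt ℝ 2 (fun t : ℝ => F (t, p.2)) p.1 := by
            have hS2 : ContDiff ℝ 2 (fun s : ℝ =>
                η * s^2 - ε * (Real.cosh (k*s) * Real.sin (k*(p.2+L)))) := by
              apply ContDiff.sub
              · exact contDiff_const.mul (contDiff_id.pow 2)
              · exact contDiff_const.mul
                  (((Real.contDiff_cosh.of_le le_top).comp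
                    (contDiff_const.mul contDiff_id)).mul contDiff_const)
            exact hc1.add hS2.contDiffAt
          have hsm2 : ContDiffAt ℝ 2 (fun t : ℝ => F (p.1, t)) p.2 := by
            have hT2 : ContDiff ℝ 2 (fun s : ℝ =>
                η * p.1^2 - ε * (Real.cosh (k*p.1) * Real.sin (k*(s+L)))) := by
              apply ContDiff.sub contDiff_const
              · exact contDiff_const.mul (contDiff_const.mul
                  ((Real.contDiff_sin.of_le le_top).comp
                    (contDiff_const.mul (contDiff_id.add contDiff_const))))
            exact hc2.add hT2.contDiffAt
          have ht1 := second_deriv_nonpos_of_isLocalMax hsm1 hlm1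
          have ht2 := second_deriv_nonpos_of_isLocalMax hsm2 hlm2
          rw [T1] at ht1
          rw [T2] at ht2
          have hsum : (η * 2 - ε * (Real.cosh (k*p.1) * k * k * Real.sin (k*(p.2+L))))
              + -(ε * (Real.cosh (k*p.1) * (-Real.sin (k*(p.2+L)) * k * k))) = 2*η := by ring
          linarith
        · -- boundary cases
          have hx2 : p.1^2 ≤ R^2 := sq_le_sq' hpx.1 hpx.2
          have hhp : 0 < h p := hhpos p hpy
          have hεh : 0 < ε * h p := by positivity
          have hcases : p.1 = -R ∨ p.1 = R ∨ p.2 = 0 ∨ p.2 = L := by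
            by_contra hno
            push_neg at hno
            obtain ⟨n1, n2, n3, n4⟩ := hno
            exact hint ⟨lt_of_le_of_ne hpx.1 (Ne.symm n1), lt_of_le_of_ne hpx.2 n2,
              lt_of_le_of_ne hpy.1 (Ne.symm n3), lt_of_le_of_ne hpy.2 n4⟩
          have hside : p.1 = -R ∨ p.1 = R → F p ≤ η * R^2 := by
            intro hc
            have hcosh : Real.cosh (k * p.1) = Real.cosh (k * R) := by
              rcases hc with hc | hc
              · rw [hc, mul_neg, Real.cosh_neg]
              · rw [hc]
            have h5 : Real.cosh (k * R) * (1/2) ≤ h p := hcosh ▸ hhalf p hpy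
            have h6 : L ≤ ε * h p := by
              have := hcoshR
              nlinarith [Real.cosh_pos (k*R)]
            have h7 : u p ≤ L := hb p hpy
            show u p + (η * p.1^2 - ε * h p) ≤ η * R^2
            nlinarith
          rcases hcases with hc | hc | hc | hc
          · exact hside (Or.inl hc)
          · exact hside (Or.inr hc)
          · have h7 : u p ≤ 0 := by
              have hx := hbot p.1
              have hpe : ((p.1, (0:ℝ)) : ℝ × ℝ) = p := by
                rw [← hc]
              rwa [hpe] at hx
            show u p + (η * p.1^2 - ε * h p) ≤ η * R^2
            nlinarith
          · have h7 : u p ≤ 0 := by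
              have hx := htop p.1
              have hpe : ((p.1, L) : ℝ × ℝ) = p := by
                rw [← hc]
              rwa [hpe] at hx
            show u p + (η * p.1^2 - ε * h p) ≤ η * R^2
            nlinarith
      have hle := hpmax hp0K
      have hF0 : u p0 + (η * p0.1^2 - ε * h p0) ≤ η * R^2 := le_trans hle hFpb
      have hsq : 0 ≤ η * p0.1^2 := by positivity
      linarith
    -- let η → 0
    by_contra hgt
    push_neg at hgt
    have hR2 : (0:ℝ) < R^2 := by positivity
    have hk2 := key2 ((u p0 - ε * h p0)/(2*R^2)) (div_pos (by linarith) (by positivity))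
    have heq2 : (u p0 - ε * h p0)/(2*R^2) * R^2 = (u p0 - ε * h p0)/2 := by
      field_simp
    rw [heq2] at hk2
    linarith
  -- conclude
  by_contra hpos
  push_neg at hpos
  have hh0 := hhpos p0 hp0
  have hkey := key (u p0 / (2 * h p0)) (by positivity)
  have heq : u p0 / (2 * h p0) * h p0 = u p0 / 2 := by field_simp
  rw [heq] at hkey
  linarith

/-- **Liouville theorem on a horizontal strip.**  If `φ` is continuous on the closed strip
`ℝ × [0, L]`, harmonic on the open strip, with `φ(x,0) = 0`, `φ(x,L) = L`, and
`0 ≤ φ ≤ L`, then `φ(x,y) = y`. -/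
theorem strip_liouville_horizontal (L : ℝ) (hL : 0 < L) (φ : ℝ × ℝ → ℝ)
    (hcont : ContinuousOn φ {p : ℝ × ℝ | p.2 ∈ Icc 0 L})
    (hharm : Harmonic2On φ {p : ℝ × ℝ | p.2 ∈ Ioo 0 L})
    (hbot : ∀ x : ℝ, φ (x, 0) = 0) (htop : ∀ x : ℝ, φ (x, L) = L)
    (hbdd : ∀ p : ℝ × ℝ, p.2 ∈ Icc 0 L → 0 ≤ φ p ∧ φ p ≤ L) :
    ∀ p : ℝ × ℝ, p.2 ∈ Icc 0 L → φ p = p.2 := by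
  -- shared regularity facts
  have hlines : ∀ p : ℝ × ℝ, p.2 ∈ Ioo 0 L →
      ContDiffAt ℝ 2 (fun t : ℝ => φ (t, p.2)) p.1 ∧
      ContDiffAt ℝ 2 (fun t : ℝ => φ (p.1, t)) p.2 ∧
      deriv (deriv (fun t : ℝ => φ (t, p.2))) p.1
        + deriv (deriv (fun t : ℝ => φ (p.1, t))) p.2 = 0 := by
    intro p hp
    obtain ⟨hφC, hφlap⟩ := hharm p hp
    refine ⟨?_, ?_, ?_⟩
    · exact hφC.comp p.1 ((contDiff_id.prodMk contDiff_const).contDiffAt)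
    · exact hφC.comp p.2 ((contDiff_const.prodMk contDiff_id).contDiffAt)
    · exact hφlap
  have hdiff2 : ∀ p : ℝ × ℝ, p.2 ∈ Ioo 0 L →
      DifferentiableAt ℝ (fun s : ℝ => φ (p.1, s)) p.2 := by
    intro p hp
    exact ((hlines p hp).2.1).differentiableAt (by norm_num)
  -- u₁ = φ - y ≤ 0
  have h1 : ∀ p : ℝ × ℝ, p.2 ∈ Icc 0 L → φ p - p.2 ≤ 0 := by
    apply strip_le hL (fun q => φ q - q.2)
    · exact hcont.sub continuous_snd.continuousOn
    · intro p hp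
      obtain ⟨hc1, hc2, hlap⟩ := hlines p hp
      refine ⟨hc1.sub contDiffAt_const, hc2.sub contDiffAt_id, ?_⟩
      have e1 : deriv (fun t : ℝ => φ (t, p.2) - p.2) = deriv (fun t : ℝ => φ (t, p.2)) :=
        funext fun t => deriv_sub_const _
      have e2 : deriv (fun t : ℝ => φ (p.1, t) - t)
          =ᶠ[𝓝 p.2] fun t => deriv (fun s : ℝ => φ (p.1, s)) t - 1 := by
        filter_upwards [Ioo_mem_nhds hp.1 hp.2] with t ht
        rw [deriv_fun_sub (hdiff2 (p.1, t) ht) differentiableAt_fun_id, deriv_id'']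
      show deriv (deriv (fun t : ℝ => φ (t, p.2) - p.2)) p.1
        + deriv (deriv (fun t : ℝ => φ (p.1, t) - t)) p.2 = 0
      rw [e1, e2.deriv_eq]
      have e3 : deriv (fun t : ℝ => deriv (fun s : ℝ => φ (p.1, s)) t - 1) p.2
          = deriv (deriv (fun s : ℝ => φ (p.1, s))) p.2 := deriv_sub_const _
      rw [e3]
      exact hlap
    · intro x; rw [hbot x]; norm_num
    · intro x; rw [htop x]; norm_num
    · intro p hp
      have hb := hbdd p hp
      have hy := hp.1
      show φ p - p.2 ≤ L
      linarith [hb.2]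
  -- u₂ = y - φ ≤ 0
  have h2 : ∀ p : ℝ × ℝ, p.2 ∈ Icc 0 L → p.2 - φ p ≤ 0 := by
    apply strip_le hL (fun q => q.2 - φ q)
    · exact continuous_snd.continuousOn.sub hcont
    · intro p hp
      obtain ⟨hc1, hc2, hlap⟩ := hlines p hp
      refine ⟨contDiffAt_const.sub hc1, contDiffAt_id.sub hc2, ?_⟩
      have e1 : deriv (fun t : ℝ => p.2 - φ (t, p.2))
          = fun t => -deriv (fun s : ℝ => φ (s, p.2)) t :=
        funext fun t => deriv_const_sub _
      have e2 : deriv (fun t : ℝ => t - φ (p.1, t))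
          =ᶠ[𝓝 p.2] fun t => 1 - deriv (fun s : ℝ => φ (p.1, s)) t := by
        filter_upwards [Ioo_mem_nhds hp.1 hp.2] with t ht
        rw [deriv_fun_sub differentiableAt_fun_id (hdiff2 (p.1, t) ht), deriv_id'']
      show deriv (deriv (fun t : ℝ => p.2 - φ (t, p.2))) p.1
        + deriv (deriv (fun t : ℝ => t - φ (p.1, t))) p.2 = 0
      rw [e1, e2.deriv_eq]
      have e3 : deriv (fun t : ℝ => -deriv (fun s : ℝ => φ (s, p.2)) t) p.1
          = -deriv (deriv (fun s : ℝ => φ (s, p.2))) p.1 := deriv.neg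
      have e4 : deriv (fun t : ℝ => 1 - deriv (fun s : ℝ => φ (p.1, s)) t) p.2
          = -deriv (deriv (fun s : ℝ => φ (p.1, s))) p.2 := deriv_const_sub _
      rw [e3, e4]
      linarith [hlap]
    · intro x; rw [hbot x]  -- goal: (x,0).2 - φ (x,0) ≤ 0 → 0 - 0 ≤ 0? careful
      norm_num
    · intro x; rw [htop x]; norm_num
    · intro p hp
      have hb := hbdd p hp
      have hy := hp.2
      show p.2 - φ p ≤ L
      linarith [hb.1]
  intro p hp
  have := h1 p hp
  have := h2 p hp
  linarith
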